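/- Consider a Blackwell game (with finitely many players, finite action sets, and bounded Borel-measurable payoff functions). For every player i ∈ I and every δ > 0, player i has a subgame-perfect δ-maxmin strategy, i.e., a strategy σ_i^δ such that E_{(σ_i^δ, σ_{-i})}[f_i | h] ≥ v_i(h) − δ for every history h ∈ H and every strategy profile σ_{-i} of player i's opponents. -/
import Mathlib


open MeasureTheory

namespace Blackwell

/-- The set of plays: infinite streams of action profiles. -/
abbrev Play {ι : Type*} (Ac : ι → Type*) : Type _ := ℕ → ∀ j, Ac j

/-- A behavior strategy of player `i`: a mixed action after every finite history.
A history of length `t` is encoded by the first `t` coordinates of a play, and the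
strategy is required to depend only on these coordinates. -/
structure Strategy {ι : Type*} (Ac : ι → Type*) (i : ι) where
  act : ℕ → Play Ac → PMF (Ac i)
  depends_on_past : ∀ (t : ℕ) (p q : Play Ac), (∀ s, s < t → p s = q s) → act t p = act t q

/-- A strategy profile: a behavior strategy for every player. -/
abbrev Profile {ι : Type*} (Ac : ι → Type*) : Type _ := ∀ i, Strategy Ac i

/-- The assignment, to each strategy profile `σ`, of the induced (Ionescu–Tulcea)
probability measure `P_σ` on the set of plays; it is uniquely characterized by the
probabilities it assigns to cylinder sets. -/
structure PlayMeasure {ι : Type*} [Fintype ι] (Ac : ι → Type*)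
    [∀ i, MeasurableSpace (Ac i)] where
  μ : Profile Ac → Measure (Play Ac)
  isProb : ∀ σ, IsProbabilityMeasure (μ σ)
  cyl : ∀ (σ : Profile Ac) (n : ℕ) (p : Play Ac),
    μ σ {q | ∀ t, t < n → q t = p t}
      = ∏ t ∈ Finset.range n, ∏ i, ((σ i).act t p) (p t i)

variable {ι : Type*} [Fintype ι] [DecidableEq ι] [Nonempty ι]
  {Ac : ι → Type*} [∀ i, Fintype (Ac i)] [∀ i, Nonempty (Ac i)]
  [∀ i, MeasurableSpace (Ac i)] [∀ i, DiscreteMeasurableSpace (Ac i)]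

/-- The expected payoff `E_σ[f]` of a strategy profile `σ` for payoff function `f`. -/
noncomputable def expPay (PM : PlayMeasure Ac) (σ : Profile Ac) (f : Play Ac → ℝ) : ℝ :=
  ∫ p, f p ∂(PM.μ σ)

/-- Concatenation of the history given by the first `n` coordinates of `h` with the play `q`. -/
def splice (n : ℕ) (h q : Play Ac) : Play Ac := fun t => if t < n then h t else q (t - n)

/-- The continuation of a strategy in the subgame that starts at the history
given by the first `n` coordinates of `h`. -/
def Strategy.shift {i : ι} (σi : Strategy Ac i) (n : ℕ) (h : Play Ac) : Strategy Ac i where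
  act t q := σi.act (n + t) (splice n h q)
  depends_on_past := by
    intro t p q hpq
    refine σi.depends_on_past _ _ _ ?_
    intro s hs
    simp only [splice]
    by_cases hsn : s < n
    · simp [hsn]
    · simp only [if_neg hsn]
      exact hpq (s - n) (by omega)

/-- The expected payoff `E_σ[f ∣ h]` in the subgame that starts at the history
given by the first `n` coordinates of `h`. -/
noncomputable def subExp (PM : PlayMeasure Ac) (σ : Profile Ac) (f : Play Ac → ℝ)
    (n : ℕ) (h : Play Ac) : ℝ :=
  ∫ q, f (splice n h q) ∂(PM.μ (fun i => (σ i).shift n h))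

/-- The minmax value of player `i`. -/
noncomputable def minmax (PM : PlayMeasure Ac) (f : Play Ac → ℝ) (i : ι) : ℝ :=
  ⨅ τ : Profile Ac, ⨆ σi : Strategy Ac i, expPay PM (Function.update τ i σi) f

/-- The maxmin value of player `i`. -/
noncomputable def maxmin (PM : PlayMeasure Ac) (f : Play Ac → ℝ) (i : ι) : ℝ :=
  ⨆ σi : Strategy Ac i, ⨅ τ : Profile Ac, expPay PM (Function.update τ i σi) f

/-- The minmax value of player `i` in the subgame that starts at the history
given by the first `n` coordinates of `h`. -/
noncomputable def subMinmax (PM : PlayMeasure Ac) (f : Play Ac → ℝ) (i : ι)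
    (n : ℕ) (h : Play Ac) : ℝ :=
  ⨅ τ : Profile Ac, ⨆ σi : Strategy Ac i, subExp PM (Function.update τ i σi) f n h

/-- The maxmin value of player `i` in the subgame that starts at the history
given by the first `n` coordinates of `h`. -/
noncomputable def subMaxmin (PM : PlayMeasure Ac) (f : Play Ac → ℝ) (i : ι)
    (n : ℕ) (h : Play Ac) : ℝ :=
  ⨆ σi : Strategy Ac i, ⨅ τ : Profile Ac, subExp PM (Function.update τ i σi) f n h

/-- A strategy profile `σ` is an `ε`-equilibrium if no player can gain more than `ε`
by a unilateral deviation. -/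
def IsEpsEquilibrium (PM : PlayMeasure Ac) (f : ι → Play Ac → ℝ) (ε : ℝ)
    (σ : Profile Ac) : Prop :=
  ∀ (i : ι) (σi : Strategy Ac i),
    expPay PM (Function.update σ i σi) (f i) ≤ expPay PM σ (f i) + ε

/-- A payoff function is tail-measurable if changing finitely many coordinates of the
play does not change its value. -/
def TailMeasurable (f : Play Ac → ℝ) : Prop :=
  ∀ p q : Play Ac, (∃ N, ∀ t, N ≤ t → p t = q t) → f p = f q

/-- A payoff function is bounded. -/
def BddPayoff (f : Play Ac → ℝ) : Prop := ∃ C, ∀ p, |f p| ≤ C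

set_option linter.unusedSectionVars false
set_option maxHeartbeats 1000000
section Aux

open scoped ENNReal
open Function

noncomputable local instance : Inhabited (∀ j, Ac j) := Classical.inhabited_of_nonempty inferInstance

/-- Histories as lists of action profiles. -/
abbrev Hist (Ac : ι → Type*) := List (∀ j, Ac j)

/-- The play associated to a history (extended by default junk). -/
noncomputable def pl (l : Hist Ac) : Play Ac := fun t => l.getD t default

/-- The cylinder set of a history. -/
def Cyl (l : Hist Ac) : Set (Play Ac) := {q | ∀ t, t < l.length → q t = pl l t}

/-- The history consisting of the first `t` coordinates of a play. -/
def histOf (t : ℕ) (p : Play Ac) : Hist Ac := (List.range t).map p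

@[simp] lemma histOf_length (t : ℕ) (p : Play Ac) : (histOf t p).length = t := by
  simp [histOf]

lemma pl_histOf {t s : ℕ} (hs : s < t) (p : Play Ac) : pl (histOf t p) s = p s := by
  simp [pl, histOf, List.getD, List.getElem?_map, List.getElem?_range hs]

lemma pl_eq_of_lt {l m : Hist Ac} (hpre : l <+: m) {t : ℕ} (ht : t < l.length) :
    pl l t = pl m t := by
  obtain ⟨r, rfl⟩ := hpre
  simp [pl, List.getD, List.getElem?_append, ht]

lemma prefix_of_pl_eq {l m : Hist Ac} (hlen : l.length ≤ m.length)
    (h : ∀ t, t < l.length → pl l t = pl m t) : l <+: m := by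
  refine List.prefix_iff_eq_take.2 ?_
  apply List.ext_getElem (by simp [Nat.min_eq_left hlen])
  intro t h1 h2
  have := h t h1
  simpa [pl, List.getD, List.getElem?_eq_getElem, h1, Nat.lt_of_lt_of_le h1 hlen,
    List.getElem_take] using this

lemma splice_lt {n : ℕ} {h q : Play Ac} {t : ℕ} (ht : t < n) : splice n h q t = h t := if_pos ht

lemma splice_ge {n : ℕ} {h q : Play Ac} {t : ℕ} (ht : n ≤ t) : splice n h q t = q (t - n) :=
  if_neg (by omega)

lemma splice_congr {n : ℕ} {h h' : Play Ac} (hh : ∀ s, s < n → h s = h' s) (q : Play Ac) :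
    splice n h q = splice n h' q := by
  funext t
  by_cases ht : t < n
  · simp only [splice, if_pos ht]; exact hh t ht
  · simp only [splice, if_neg ht]

lemma splice_splice (n m : ℕ) (h h' q : Play Ac) :
    splice n h (splice m h' q) = splice (n + m) (splice n h h') q := by
  funext t
  rcases lt_or_ge t n with ht | ht
  · rw [splice_lt ht, splice_lt (by omega), splice_lt ht]
  rcases lt_or_ge t (n + m) with ht2 | ht2
  · rw [splice_ge ht, splice_lt (by omega), splice_lt ht2, splice_ge ht]
  · rw [splice_ge ht, splice_ge (by omega), splice_ge ht2, Nat.sub_sub]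

lemma Strategy.ext' {i : ι} {σ τ : Strategy Ac i} (h : ∀ t p, σ.act t p = τ.act t p) : σ = τ := by
  cases σ; cases τ
  simp only [Strategy.mk.injEq]
  funext t p; exact h t p

lemma shift_act {i : ι} (σi : Strategy Ac i) (n : ℕ) (h : Play Ac) (t : ℕ) (q : Play Ac) :
    (σi.shift n h).act t q = σi.act (n + t) (splice n h q) := rfl

lemma shift_congr {i : ι} (σi : Strategy Ac i) {n : ℕ} {h h' : Play Ac}
    (hh : ∀ s, s < n → h s = h' s) : σi.shift n h = σi.shift n h' :=
  Strategy.ext' fun t q => by rw [shift_act, shift_act, splice_congr hh]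

lemma shift_shift {i : ι} (σi : Strategy Ac i) (n m : ℕ) (h h' : Play Ac) :
    (σi.shift n h).shift m h' = σi.shift (n + m) (splice n h h') :=
  Strategy.ext' fun t q => by
    rw [shift_act, shift_act, shift_act, splice_splice, Nat.add_assoc]

/-- Every subset of the (finite) one-shot action-profile space is measurable. -/
lemma measurableSet_actSet (S : Set (∀ j, Ac j)) : MeasurableSet S :=
  (Set.toFinite S).measurableSet

lemma measurable_splice (n : ℕ) (h : Play Ac) :
    Measurable (fun q => splice n h q : Play Ac → Play Ac) :=
  measurable_pi_lambda _ fun t => by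
    by_cases ht : t < n
    · simpa [splice, ht] using measurable_const
    · simpa [splice, ht] using measurable_pi_apply (t - n)

lemma measurableSet_cyl (l : Hist Ac) : MeasurableSet (Cyl l) := by
  have : Cyl l = ⋂ (t : Fin l.length), (fun q : Play Ac => q t) ⁻¹' {pl l t} := by
    ext q
    simp only [Cyl, Set.mem_setOf_eq, Set.mem_iInter, Set.mem_preimage, Set.mem_singleton_iff]
    exact ⟨fun h t => h t t.2, fun h t ht => h ⟨t, ht⟩⟩
  rw [this]
  exact MeasurableSet.iInter fun t => (measurable_pi_apply _) (measurableSet_actSet _)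

/-- The collection of all cylinder sets. -/
def CylSet : Set (Set (Play Ac)) := Set.range (Cyl (Ac := Ac))

lemma cyl_inter_of_prefix {l m : Hist Ac} (hpre : l <+: m) : Cyl l ∩ Cyl m = Cyl m := by
  apply Set.inter_eq_self_of_subset_right
  intro q hq t ht
  rw [hq t (lt_of_lt_of_le ht hpre.length_le), pl_eq_of_lt hpre ht]

lemma cyl_disjoint {l m : Hist Ac} (h1 : ¬ l <+: m) (h2 : ¬ m <+: l) :
    Cyl l ∩ Cyl m = ∅ := by
  by_contra hne
  obtain ⟨q, hql, hqm⟩ := Set.nonempty_iff_ne_empty.2 hne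
  rcases le_total l.length m.length with hlen | hlen
  · exact h1 (prefix_of_pl_eq hlen fun t ht =>
      ((hql t ht).symm.trans (hqm t (lt_of_lt_of_le ht hlen))))
  · exact h2 (prefix_of_pl_eq hlen fun t ht =>
      ((hqm t ht).symm.trans (hql t (lt_of_lt_of_le ht hlen))))

lemma isPiSystem_cylSet : IsPiSystem (CylSet (Ac := Ac)) := by
  rintro _ ⟨l, rfl⟩ _ ⟨m, rfl⟩ hne
  rcases le_total l.length m.length with hlen | hlen
  · have hpre : l <+: m := by
      obtain ⟨q, hql, hqm⟩ := hne
      exact prefix_of_pl_eq hlen fun t ht =>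
        ((hql t ht).symm.trans (hqm t (lt_of_lt_of_le ht hlen)))
    rw [cyl_inter_of_prefix hpre]; exact ⟨m, rfl⟩
  · have hpre : m <+: l := by
      obtain ⟨q, hql, hqm⟩ := hne
      exact prefix_of_pl_eq hlen fun t ht =>
        ((hqm t ht).symm.trans (hql t (lt_of_lt_of_le ht hlen)))
    rw [Set.inter_comm, cyl_inter_of_prefix hpre]; exact ⟨l, rfl⟩

lemma mem_cyl_iff {l : Hist Ac} {q : Play Ac} : q ∈ Cyl l ↔ ∀ t, t < l.length → q t = pl l t :=
  Iff.rfl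

lemma eval_singleton_eq_iUnion (t : ℕ) (a : ∀ j, Ac j) :
    {q : Play Ac | q t = a} = ⋃ (g : Fin t → (∀ j, Ac j)), Cyl (List.ofFn g ++ [a]) := by
  ext q
  simp only [Set.mem_setOf_eq, Set.mem_iUnion]
  constructor
  · intro hq
    refine ⟨fun s => q s, fun s hs => ?_⟩
    have hlen : (List.ofFn (fun s : Fin t => q s) ++ [a]).length = t + 1 := by simp
    rw [hlen] at hs
    rcases lt_or_ge s t with hst | hst
    · simp [pl, List.getD, List.getElem?_append, hst, List.getElem?_ofFn]
    · have : s = t := by omega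
      subst this
      simp [pl, List.getD, List.getElem?_append_right, hq]
  · rintro ⟨g, hg⟩
    have hlen : (List.ofFn g ++ [a]).length = t + 1 := by simp
    have := hg t (by rw [hlen]; omega)
    rw [this]
    simp [pl, List.getD, List.getElem?_append_right]

lemma generateFrom_cylSet :
    (inferInstance : MeasurableSpace (Play Ac)) = .generateFrom (CylSet (Ac := Ac)) := by
  refine le_antisymm ?_ (MeasurableSpace.generateFrom_le ?_)
  · rw [show (inferInstance : MeasurableSpace (Play Ac)) = MeasurableSpace.pi from rfl,
      MeasurableSpace.pi]
    refine iSup_le fun t => ?_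
    intro s hs
    obtain ⟨S, _, rfl⟩ := hs
    have : (fun q : Play Ac => q t) ⁻¹' S = ⋃ (a : ∀ j, Ac j) (_ : a ∈ S), {q : Play Ac | q t = a} := by
      ext q; simp [Set.mem_preimage, eq_comm]
    rw [this]
    refine MeasurableSet.iUnion fun a => MeasurableSet.iUnion fun _ => ?_
    rw [eval_singleton_eq_iUnion]
    exact MeasurableSet.iUnion fun g => MeasurableSpace.measurableSet_generateFrom ⟨_, rfl⟩
  · rintro _ ⟨l, rfl⟩
    exact measurableSet_cyl l

lemma measure_ext_cyl {μ ν : Measure (Play Ac)} [IsFiniteMeasure μ]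
    (h : ∀ l : Hist Ac, μ (Cyl l) = ν (Cyl l)) (hu : μ Set.univ = ν Set.univ) : μ = ν :=
  MeasureTheory.ext_of_generate_finite _ generateFrom_cylSet isPiSystem_cylSet
    (by rintro s ⟨l, rfl⟩; exact h l) hu

noncomputable def cylProd (σ : Profile Ac) (l : Hist Ac) : ℝ≥0∞ :=
  ∏ t ∈ Finset.range l.length, ∏ j, ((σ j).act t (pl l)) (pl l t j)

lemma mu_cyl (PM : PlayMeasure Ac) (σ : Profile Ac) (l : Hist Ac) :
    PM.μ σ (Cyl l) = cylProd σ l :=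
  PM.cyl σ l.length (pl l)

lemma pl_append_left {l r : Hist Ac} {t : ℕ} (ht : t < l.length) : pl (l ++ r) t = pl l t :=
  (pl_eq_of_lt ⟨r, rfl⟩ ht).symm

lemma pl_append_right (l r : Hist Ac) (t : ℕ) : pl (l ++ r) (l.length + t) = pl r t := by
  rw [pl, pl, List.getD_append_right _ _ _ _ (by omega), Nat.add_sub_cancel_left]

lemma pl_drop (m : Hist Ac) (N t : ℕ) : pl (m.drop N) t = pl m (N + t) := by
  simp [pl, List.getD, List.getElem?_drop]

lemma splice_pl_drop {l m : Hist Ac} (hpre : l <+: m) :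
    splice l.length (pl l) (pl (m.drop l.length)) = pl m := by
  funext s
  rcases lt_or_ge s l.length with hs | hs
  · rw [splice_lt hs, pl_eq_of_lt hpre hs]
  · rw [splice_ge hs, pl_drop, Nat.add_sub_cancel' hs]

lemma cylProd_split (π : Profile Ac) {l m : Hist Ac} (hpre : l <+: m) :
    cylProd π m
      = cylProd π l * cylProd (fun j => (π j).shift l.length (pl l)) (m.drop l.length) := by
  have hNle : l.length ≤ m.length := hpre.length_le
  have hlen : m.length = l.length + (m.drop l.length).length := by
    simp [List.length_drop]
    omega
  unfold cylProd
  rw [hlen, Finset.prod_range_add]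
  congr 1
  · refine Finset.prod_congr rfl fun t ht => ?_
    have ht' : t < l.length := Finset.mem_range.1 ht
    have hact : ∀ j : ι, (π j).act t (pl m) = (π j).act t (pl l) := fun j =>
      (π j).depends_on_past t _ _ fun s hs => (pl_eq_of_lt hpre (by omega)).symm
    refine Finset.prod_congr rfl fun j _ => ?_
    rw [hact j, pl_eq_of_lt hpre ht']
  · refine Finset.prod_congr rfl fun t _ => ?_
    refine Finset.prod_congr rfl fun j _ => ?_
    rw [shift_act, splice_pl_drop hpre, pl_drop]

lemma splice_preimage_cyl_of_prefix {l m : Hist Ac} (hpre : l <+: m) :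
    (fun q => splice l.length (pl l) q) ⁻¹' Cyl m = Cyl (m.drop l.length) := by
  have hNle : l.length ≤ m.length := hpre.length_le
  have hdl : (m.drop l.length).length = m.length - l.length := by simp
  ext q
  simp only [Set.mem_preimage, mem_cyl_iff]
  constructor
  · intro hq t ht
    rw [hdl] at ht
    have := hq (l.length + t) (by omega)
    rw [splice_ge (by omega), Nat.add_sub_cancel_left] at this
    rw [this, pl_drop]
  · intro hq t ht
    rcases lt_or_ge t l.length with hs | hs
    · rw [splice_lt hs, pl_eq_of_lt hpre hs]
    · rw [splice_ge hs]
      have := hq (t - l.length) (by rw [hdl]; omega)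
      rw [this, pl_drop, Nat.add_sub_cancel' hs]

lemma splice_preimage_cyl_of_prefix' {l m : Hist Ac} (hpre : m <+: l) :
    (fun q => splice l.length (pl l) q) ⁻¹' Cyl m = Set.univ := by
  ext q
  simp only [Set.mem_preimage, mem_cyl_iff, Set.mem_univ, iff_true]
  intro t ht
  rw [splice_lt (by have := hpre.length_le; omega), pl_eq_of_lt hpre ht]

lemma splice_mem_cyl (l : Hist Ac) (q : Play Ac) : splice l.length (pl l) q ∈ Cyl l :=
  fun t ht => splice_lt ht

lemma splice_preimage_cyl_empty {l m : Hist Ac} (h1 : ¬ l <+: m) (h2 : ¬ m <+: l) :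
    (fun q => splice l.length (pl l) q) ⁻¹' Cyl m = ∅ := by
  ext q
  simp only [Set.mem_preimage, Set.mem_empty_iff_false, iff_false]
  intro hq
  have : splice l.length (pl l) q ∈ Cyl l ∩ Cyl m := ⟨splice_mem_cyl l q, hq⟩
  rw [cyl_disjoint h1 h2] at this
  exact this

lemma restrict_cyl (PM : PlayMeasure Ac) (π : Profile Ac) (l : Hist Ac) :
    (PM.μ π).restrict (Cyl l) =
      PM.μ π (Cyl l) •
        Measure.map (fun q => splice l.length (pl l) q)
          (PM.μ (fun j => (π j).shift l.length (pl l))) := by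
  haveI := PM.isProb π
  haveI := PM.isProb (fun j => (π j).shift l.length (pl l))
  refine measure_ext_cyl (fun m => ?_) ?_
  · rw [Measure.restrict_apply (measurableSet_cyl m), Measure.smul_apply, smul_eq_mul,
      Measure.map_apply (measurable_splice _ _) (measurableSet_cyl m)]
    by_cases hml : m <+: l
    · rw [cyl_inter_of_prefix hml, splice_preimage_cyl_of_prefix' hml,
        measure_univ, mul_one]
    · by_cases hlm : l <+: m
      · rw [Set.inter_comm, cyl_inter_of_prefix hlm, splice_preimage_cyl_of_prefix hlm,
          mu_cyl, mu_cyl, mu_cyl, cylProd_split π hlm]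
      · rw [cyl_disjoint hml hlm, splice_preimage_cyl_empty hlm hml]
        simp
  · rw [Measure.restrict_apply_univ, Measure.smul_apply, smul_eq_mul,
      Measure.map_apply (measurable_splice _ _) MeasurableSet.univ, Set.preimage_univ,
      measure_univ, mul_one]

lemma setIntegral_cyl (PM : PlayMeasure Ac) (π : Profile Ac) {g : Play Ac → ℝ}
    (hg : Measurable g) (l : Hist Ac) :
    ∫ q in Cyl l, g q ∂(PM.μ π)
      = (PM.μ π (Cyl l)).toReal * subExp PM π g l.length (pl l) := by
  rw [show (∫ q in Cyl l, g q ∂(PM.μ π)) = ∫ q, g q ∂((PM.μ π).restrict (Cyl l)) from rfl,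
    restrict_cyl PM π l, integral_smul_measure,
    integral_map (measurable_splice _ _).aemeasurable hg.aestronglyMeasurable]
  rfl

lemma integrable_bdd {μ : Measure (Play Ac)} [IsProbabilityMeasure μ] {g : Play Ac → ℝ}
    (hg : Measurable g) {C : ℝ} (hC : ∀ p, |g p| ≤ C) : Integrable g μ :=
  (integrable_const C).mono' hg.aestronglyMeasurable
    (Filter.Eventually.of_forall fun p => by simpa using hC p)

lemma abs_subExp_le (PM : PlayMeasure Ac) (π : Profile Ac) {g : Play Ac → ℝ} {C : ℝ}
    (hC : ∀ p, |g p| ≤ C) (n : ℕ) (h : Play Ac) : |subExp PM π g n h| ≤ C := by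
  haveI := PM.isProb (fun j => (π j).shift n h)
  have := norm_integral_le_of_norm_le_const (μ := PM.μ (fun j => (π j).shift n h))
    (f := fun q => g (splice n h q)) (C := C)
    (Filter.Eventually.of_forall fun q => by simpa using hC _)
  simpa [subExp] using this

lemma subExp_congr (PM : PlayMeasure Ac) (σ : Profile Ac) (g : Play Ac → ℝ) {n : ℕ}
    {h h' : Play Ac} (hh : ∀ s, s < n → h s = h' s) :
    subExp PM σ g n h = subExp PM σ g n h' := by
  unfold subExp
  have h1 : (fun j => (σ j).shift n h) = fun j => (σ j).shift n h' :=
    funext fun j => shift_congr _ hh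
  have h2 : (fun q => g (splice n h q)) = fun q => g (splice n h' q) :=
    funext fun q => by rw [splice_congr hh]
  rw [h1, h2]

lemma subMaxmin_congr (PM : PlayMeasure Ac) (g : Play Ac → ℝ) {n : ℕ}
    {h h' : Play Ac} (hh : ∀ s, s < n → h s = h' s) :
    subMaxmin PM g i n h = subMaxmin PM g i n h' := by
  unfold subMaxmin
  congr 1
  funext σi
  congr 1
  funext τ
  exact subExp_congr PM _ g hh

lemma subExp_comp (PM : PlayMeasure Ac) (π : Profile Ac) (g : Play Ac → ℝ) (l r : Hist Ac) :
    subExp PM (fun j => (π j).shift l.length (pl l)) (fun p => g (splice l.length (pl l) p))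
        r.length (pl r)
      = subExp PM π g (l ++ r).length (pl (l ++ r)) := by
  have hagree : ∀ s, s < l.length + r.length → splice l.length (pl l) (pl r) s = pl (l ++ r) s := by
    intro s hs
    rcases lt_or_ge s l.length with h1 | h1
    · rw [splice_lt h1, pl_append_left h1]
    · rw [splice_ge h1]
      conv_rhs => rw [show s = l.length + (s - l.length) by omega, pl_append_right]
  unfold subExp
  have hm : (fun j => ((π j).shift l.length (pl l)).shift r.length (pl r))
      = fun j => (π j).shift (l ++ r).length (pl (l ++ r)) := by
    funext j
    rw [shift_shift, show (l ++ r).length = l.length + r.length by simp]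
    exact shift_congr _ hagree
  rw [hm]
  congr 1
  funext q
  show g (splice l.length (pl l) (splice r.length (pl r) q))
      = g (splice (l ++ r).length (pl (l ++ r)) q)
  rw [splice_splice, show (l ++ r).length = l.length + r.length by simp]
  congr 1
  exact splice_congr hagree q

lemma pl_get {m : Hist Ac} {s : ℕ} (h : s < m.length) : pl m s = m[s] := by
  simp [pl, List.getD, List.getElem?_eq_getElem, h]

lemma histOf_take {m : Hist Ac} {t : ℕ} (ht : t ≤ m.length) : histOf t (pl m) = m.take t := by
  apply List.ext_getElem (by simp; omega)
  intro s h1 h2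
  simp only [histOf, List.getElem_map, List.getElem_range, List.getElem_take]
  simp only [histOf_length] at h1
  exact pl_get (by omega)

lemma cyl_subset_of_prefix {l m : Hist Ac} (hpre : l <+: m) : Cyl m ⊆ Cyl l := by
  rw [← cyl_inter_of_prefix hpre]
  exact Set.inter_subset_left

/-- No element of `R` is a prefix of `l`. -/
def NoR (R : Set (Hist Ac)) (l : Hist Ac) : Prop := ∀ r ∈ R, ¬ r <+: l

/-- Two profiles agree at every history having no prefix in `R`. -/
def Agree (R : Set (Hist Ac)) (π π' : Profile Ac) : Prop :=
  ∀ (j : ι) (t : ℕ) (p : Play Ac), NoR R (histOf t p) → (π j).act t p = (π' j).act t p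

/-- `R` is an antichain of nonempty histories. -/
def Antichain (R : Set (Hist Ac)) : Prop :=
  ∀ r ∈ R, ∀ r' ∈ R, r <+: r' → r = r'

lemma mu_cyl_eq_of_agree (PM : PlayMeasure Ac) {R : Set (Hist Ac)} {π π' : Profile Ac}
    (hag : Agree R π π') {m : Hist Ac} (hm : ∀ r ∈ R, r <+: m → r = m) :
    PM.μ π (Cyl m) = PM.μ π' (Cyl m) := by
  rw [mu_cyl, mu_cyl]
  unfold cylProd
  refine Finset.prod_congr rfl fun t ht => ?_
  have ht' : t < m.length := Finset.mem_range.1 ht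
  refine Finset.prod_congr rfl fun j _ => ?_
  have hnor : NoR R (histOf t (pl m)) := by
    rw [histOf_take (le_of_lt ht')]
    intro r hr hpre
    have h1 : r <+: m := hpre.trans (List.take_prefix t m)
    have h2 : r = m := hm r hr h1
    have := hpre.length_le
    rw [h2] at this
    simp at this
    omega
  rw [hag j t (pl m) hnor]

variable {R : Set (Hist Ac)}

lemma cyl_pairwise_disjoint (hanti : Antichain R) :
    Pairwise (Function.onFun Disjoint fun r : R => Cyl (r : Hist Ac)) := by
  intro r r' hne
  have h1 : ¬ (r : Hist Ac) <+: (r' : Hist Ac) := fun h =>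
    hne (Subtype.ext (hanti r r.2 r' r'.2 h))
  have h2 : ¬ (r' : Hist Ac) <+: (r : Hist Ac) := fun h =>
    hne (Subtype.ext (hanti r' r'.2 r r.2 h).symm)
  exact Set.disjoint_iff_inter_eq_empty.2 (cyl_disjoint h1 h2)

lemma measurableSet_UR : MeasurableSet (⋃ r : R, Cyl (r : Hist Ac)) :=
  MeasurableSet.iUnion fun r => measurableSet_cyl _

lemma mu_UR (PM : PlayMeasure Ac) (π : Profile Ac) (hanti : Antichain R) :
    PM.μ π (⋃ r : R, Cyl (r : Hist Ac)) = ∑' r : R, PM.μ π (Cyl (r : Hist Ac)) :=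
  measure_iUnion (cyl_pairwise_disjoint hanti) fun r => measurableSet_cyl _

lemma mu_cyl_eq_of_agree_mem (PM : PlayMeasure Ac) {π π' : Profile Ac}
    (hag : Agree R π π') (hanti : Antichain R) {r : Hist Ac} (hr : r ∈ R) :
    PM.μ π (Cyl r) = PM.μ π' (Cyl r) :=
  mu_cyl_eq_of_agree PM hag fun r' hr' hpre => by
    by_contra hne
    exact hne (hanti r' hr' r hr hpre)

lemma mu_inter_UR_eq (PM : PlayMeasure Ac) {π π' : Profile Ac}
    (hag : Agree R π π') (hanti : Antichain R) {m : Hist Ac} (hm : NoR R m) :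
    PM.μ π (Cyl m ∩ ⋃ r : R, Cyl (r : Hist Ac))
      = PM.μ π' (Cyl m ∩ ⋃ r : R, Cyl (r : Hist Ac)) := by
  have hrw : Cyl m ∩ (⋃ r : R, Cyl (r : Hist Ac)) = ⋃ r : R, (Cyl m ∩ Cyl (r : Hist Ac)) := by
    rw [Set.inter_iUnion]
  have hterm : ∀ (σ : Profile Ac) (hσ : Agree R σ σ), True := fun _ _ => trivial
  have key : ∀ r : R, PM.μ π (Cyl m ∩ Cyl (r : Hist Ac)) = PM.μ π' (Cyl m ∩ Cyl (r : Hist Ac)) := by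
    intro r
    by_cases hmr : m <+: (r : Hist Ac)
    · rw [cyl_inter_of_prefix hmr]
      exact mu_cyl_eq_of_agree_mem PM hag hanti r.2
    · have hrm : ¬ (r : Hist Ac) <+: m := hm r r.2
      rw [cyl_disjoint hmr hrm]
      simp
  rw [hrw,
    measure_iUnion (fun r r' hne => Disjoint.mono Set.inter_subset_right Set.inter_subset_right
      (cyl_pairwise_disjoint hanti hne)) (fun r => (measurableSet_cyl m).inter (measurableSet_cyl _)),
    measure_iUnion (fun r r' hne => Disjoint.mono Set.inter_subset_right Set.inter_subset_right
      (cyl_pairwise_disjoint hanti hne)) (fun r => (measurableSet_cyl m).inter (measurableSet_cyl _))]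
  exact tsum_congr key

lemma restrict_compl_UR_eq (PM : PlayMeasure Ac) {π π' : Profile Ac}
    (hag : Agree R π π') (hanti : Antichain R) :
    (PM.μ π).restrict (⋃ r : R, Cyl (r : Hist Ac))ᶜ
      = (PM.μ π').restrict (⋃ r : R, Cyl (r : Hist Ac))ᶜ := by
  haveI := PM.isProb π
  haveI := PM.isProb π'
  set U := ⋃ r : R, Cyl (r : Hist Ac) with hU
  have hUm : MeasurableSet U := measurableSet_UR
  refine measure_ext_cyl (fun m => ?_) ?_
  · rw [Measure.restrict_apply (measurableSet_cyl m), Measure.restrict_apply (measurableSet_cyl m)]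
    by_cases hm : NoR R m
    · have h1 : PM.μ π (Cyl m ∩ U) + PM.μ π (Cyl m ∩ Uᶜ) = PM.μ π (Cyl m) := by
        rw [← Set.diff_eq]
        exact measure_inter_add_diff _ hUm
      have h2 : PM.μ π' (Cyl m ∩ U) + PM.μ π' (Cyl m ∩ Uᶜ) = PM.μ π' (Cyl m) := by
        rw [← Set.diff_eq]
        exact measure_inter_add_diff _ hUm
      have h3 : PM.μ π (Cyl m) = PM.μ π' (Cyl m) :=
        mu_cyl_eq_of_agree PM hag fun r hr hpre => absurd hpre (hm r hr)
      have h4 := mu_inter_UR_eq PM hag hanti hm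
      rw [← hU] at h4
      have h5 : PM.μ π (Cyl m ∩ U) + PM.μ π (Cyl m ∩ Uᶜ)
          = PM.μ π (Cyl m ∩ U) + PM.μ π' (Cyl m ∩ Uᶜ) := by
        rw [h1, h3, ← h2, h4]
      exact (ENNReal.add_right_inj (measure_ne_top _ _)).1 h5
    · unfold NoR at hm
      push_neg at hm
      obtain ⟨r, hrR, hpre⟩ := hm
      have hsub : Cyl m ⊆ U := fun q hq =>
        Set.mem_iUnion.2 ⟨⟨r, hrR⟩, cyl_subset_of_prefix hpre hq⟩
      have hempty : Cyl m ∩ Uᶜ = ∅ := by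
        ext q
        simp only [Set.mem_inter_iff, Set.mem_compl_iff, Set.mem_empty_iff_false, iff_false,
          not_and, not_not]
        exact fun hq => hsub hq
      rw [hempty]
      simp
  · rw [Measure.restrict_apply_univ, Measure.restrict_apply_univ, measure_compl hUm
      (measure_ne_top _ _), measure_compl hUm (measure_ne_top _ _), measure_univ, measure_univ,
      mu_UR PM π hanti, mu_UR PM π' hanti]
    congr 1
    exact tsum_congr fun r => mu_cyl_eq_of_agree_mem PM hag hanti r.2

lemma integral_decomp (PM : PlayMeasure Ac) (π : Profile Ac) {g : Play Ac → ℝ}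
    (hg : Measurable g) {C : ℝ} (hC : ∀ p, |g p| ≤ C) (hanti : Antichain R) :
    ∫ q, g q ∂(PM.μ π)
      = (∫ q in (⋃ r : R, Cyl (r : Hist Ac))ᶜ, g q ∂(PM.μ π))
        + ∑' r : R, ∫ q in Cyl (r : Hist Ac), g q ∂(PM.μ π) := by
  haveI := PM.isProb π
  have hint : Integrable g (PM.μ π) := integrable_bdd hg hC
  rw [← integral_add_compl measurableSet_UR hint, add_comm]
  congr 1
  exact integral_iUnion (fun r => measurableSet_cyl _) (cyl_pairwise_disjoint hanti)
    hint.integrableOn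

noncomputable instance (j : ι) : Inhabited (Strategy Ac j) :=
  ⟨⟨fun _ _ => PMF.pure (Classical.arbitrary _), fun _ _ _ _ => rfl⟩⟩

lemma histOf_eq_of_agree {t : ℕ} {p q : Play Ac} (h : ∀ s, s < t → p s = q s) :
    histOf t p = histOf t q := by
  apply List.ext_getElem (by simp)
  intro s h1 h2
  simp only [histOf, List.getElem_map, List.getElem_range]
  exact h s (by simpa using h1)

lemma histOf_splice (l₀ : Hist Ac) (t : ℕ) (q : Play Ac) :
    histOf (l₀.length + t) (splice l₀.length (pl l₀) q) = l₀ ++ histOf t q := by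
  apply List.ext_getElem (by simp)
  intro s h1 h2
  simp only [histOf, List.getElem_map, List.getElem_range]
  simp only [histOf_length] at h1
  rcases lt_or_ge s l₀.length with hs | hs
  · rw [splice_lt hs, pl_get hs, List.getElem_append_left hs]
  · rw [splice_ge hs, List.getElem_append_right (by omega)]
    simp [histOf]

lemma prefix_concat_cases {r' r'' : Hist Ac} {a : ∀ j, Ac j} (h : r'' <+: r' ++ [a]) :
    r'' <+: r' ∨ r'' = r' ++ [a] := by
  rcases le_or_gt r''.length r'.length with hl | hl
  · left
    have h1 := List.prefix_iff_eq_take.mp h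
    rw [List.take_append_of_le_length hl] at h1
    rw [h1]
    exact List.take_prefix _ _
  · right
    exact h.eq_of_length_le (by simp; omega)

open Classical in
/-- Recursive computation of the most recent restart point, on reversed histories. -/
noncomputable def baseAux (res : Hist Ac → Hist Ac → Prop) : List (∀ j, Ac j) → Hist Ac
  | [] => []
  | a :: rrev =>
      if res (baseAux res rrev) ((a :: rrev).reverse) then (a :: rrev).reverse
      else baseAux res rrev

/-- The most recent restart point weakly preceding a history. -/
noncomputable def baseF (res : Hist Ac → Hist Ac → Prop) (l : Hist Ac) : Hist Ac :=
  baseAux res l.reverse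

@[simp] lemma baseF_nil (res : Hist Ac → Hist Ac → Prop) : baseF res [] = [] := rfl

open Classical in
lemma baseF_concat (res : Hist Ac → Hist Ac → Prop) (l : Hist Ac) (a : ∀ j, Ac j) :
    baseF res (l ++ [a])
      = if res (baseF res l) (l ++ [a]) then l ++ [a] else baseF res l := by
  have h1 : (l ++ [a]).reverse = a :: l.reverse := by simp
  have h2 : (a :: l.reverse).reverse = l ++ [a] := by simp
  rw [baseF, h1, baseAux, h2]
  rfl

lemma baseF_prefix (res : Hist Ac → Hist Ac → Prop) (l : Hist Ac) : baseF res l <+: l := by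
  induction l using List.reverseRecOn with
  | nil => simp
  | append_singleton l a ih =>
    rw [baseF_concat]
    split
    · exact List.prefix_rfl
    · exact ih.trans (List.prefix_append l [a])

lemma baseF_idem (res : Hist Ac → Hist Ac → Prop) (l : Hist Ac) :
    baseF res (baseF res l) = baseF res l := by
  induction l using List.reverseRecOn with
  | nil => simp
  | append_singleton l a ih =>
    rw [baseF_concat]
    split
    · rename_i hc
      rw [baseF_concat, if_pos hc]
    · exact ih

/-- If there is no restart at any nonempty extension piece `r'` of `l₀` weakly below `r`,
then the base is unchanged along `r`. -/
lemma baseF_append_of_no_restart (res : Hist Ac → Hist Ac → Prop) (l₀ : Hist Ac) (r : Hist Ac)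
    (hno : ∀ r', r' <+: r → r' ≠ [] → baseF res (l₀ ++ r') ≠ l₀ ++ r') :
    baseF res (l₀ ++ r) = baseF res l₀ := by
  induction r using List.reverseRecOn with
  | nil => simp
  | append_singleton r a ih =>
    have h1 : baseF res (l₀ ++ (r ++ [a])) ≠ l₀ ++ (r ++ [a]) :=
      hno (r ++ [a]) List.prefix_rfl (by simp)
    have h2 : l₀ ++ (r ++ [a]) = (l₀ ++ r) ++ [a] := by rw [List.append_assoc]
    have hbase : baseF res (l₀ ++ r) = baseF res l₀ :=
      ih fun r' hr' hne => hno r' (hr'.trans (List.prefix_append r [a])) hne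
    rw [h2, baseF_concat] at h1 ⊢
    by_cases hc : res (baseF res (l₀ ++ r)) ((l₀ ++ r) ++ [a])
    · rw [if_pos hc] at h1
      rw [← h2] at h1
      exact absurd (by rw [h2]) h1
    · rw [if_neg hc]
      exact hbase

/-- The set of minimal restart points strictly extending `l₀` (relative pieces). -/
def Rst (res : Hist Ac → Hist Ac → Prop) (l₀ : Hist Ac) : Set (Hist Ac) :=
  {r | r ≠ [] ∧ baseF res (l₀ ++ r) = l₀ ++ r ∧
    ∀ r', r' <+: r → r' ≠ r → r' ≠ [] → baseF res (l₀ ++ r') ≠ l₀ ++ r'}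

lemma Rst_antichain (res : Hist Ac → Hist Ac → Prop) (l₀ : Hist Ac) :
    Antichain (Rst res l₀) := by
  intro r hr r' hr' hpre
  by_contra hne
  exact hr'.2.2 r hpre hne hr.1 hr.2.1

lemma noRst_no_restart (res : Hist Ac → Hist Ac → Prop) (l₀ : Hist Ac) (r' : Hist Ac)
    (hnoR : ∀ r ∈ Rst res l₀, ¬ r <+: r') :
    ∀ r'', r'' <+: r' → r'' ≠ [] → baseF res (l₀ ++ r'') ≠ l₀ ++ r'' := by
  induction r' using List.reverseRecOn with
  | nil =>
    intro r'' hpre hne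
    exact absurd (List.prefix_nil.mp hpre) hne
  | append_singleton r' a ih =>
    have ih' := ih fun r hr hrp => hnoR r hr (hrp.trans (List.prefix_append r' [a]))
    intro r'' hpre hne
    rcases prefix_concat_cases hpre with h | h
    · exact ih' r'' h hne
    · subst h
      intro heq
      have hmem : (r' ++ [a]) ∈ Rst res l₀ := by
        refine ⟨by simp, heq, fun r₃ hp₃ hne₃ hnil₃ => ?_⟩
        rcases prefix_concat_cases hp₃ with h₃ | h₃
        · exact ih' r₃ h₃ hnil₃
        · exact absurd h₃ hne₃
      exact hnoR _ hmem List.prefix_rfl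

lemma baseF_append_eq (res : Hist Ac → Hist Ac → Prop) (l₀ : Hist Ac) {r' : Hist Ac}
    (hnoR : ∀ r ∈ Rst res l₀, ¬ r <+: r') :
    baseF res (l₀ ++ r') = baseF res l₀ :=
  baseF_append_of_no_restart res l₀ r' (fun r'' h1 h2 =>
    noRst_no_restart res l₀ r' hnoR r'' h1 h2)

/-- The glued restart strategy. -/
noncomputable def sigmaStar {i : ι} (res : Hist Ac → Hist Ac → Prop)
    (ρ : Hist Ac → Strategy Ac i) : Strategy Ac i where
  act t p := (ρ (baseF res (histOf t p))).act t p
  depends_on_past := by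
    intro t p q hpq
    show (ρ (baseF res (histOf t p))).act t p = (ρ (baseF res (histOf t q))).act t q
    rw [histOf_eq_of_agree hpq]
    exact (ρ (baseF res (histOf t q))).depends_on_past t p q hpq

lemma sigmaStar_act_eq {i : ι} (res : Hist Ac → Hist Ac → Prop) (ρ : Hist Ac → Strategy Ac i)
    (l₀ : Hist Ac) {t : ℕ} {q : Play Ac}
    (hnoR : ∀ r ∈ Rst res l₀, ¬ r <+: histOf t q) :
    ((sigmaStar res ρ).shift l₀.length (pl l₀)).act t q
      = ((ρ (baseF res l₀)).shift l₀.length (pl l₀)).act t q := by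
  rw [shift_act, shift_act]
  show (ρ (baseF res (histOf (l₀.length + t) (splice l₀.length (pl l₀) q)))).act _ _ = _
  rw [histOf_splice, baseF_append_eq res l₀ hnoR]

lemma res_at_restart (res : Hist Ac → Hist Ac → Prop) (l₀ : Hist Ac) {r : Hist Ac}
    (hr : r ∈ Rst res l₀) : res (baseF res l₀) (l₀ ++ r) := by
  obtain ⟨rh, a, rfl⟩ : ∃ L b, r = L ++ [b] := (List.eq_nil_or_concat' r).resolve_left hr.1
  have hparent : baseF res (l₀ ++ rh) = baseF res l₀ := by
    apply baseF_append_of_no_restart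
    intro r₃ hp₃ hnil₃
    refine hr.2.2 r₃ (hp₃.trans (List.prefix_append rh [a])) ?_ hnil₃
    intro hEq
    have := hp₃.length_le
    rw [hEq] at this
    simp at this
  have hself := hr.2.1
  rw [show l₀ ++ (rh ++ [a]) = (l₀ ++ rh) ++ [a] by rw [List.append_assoc], baseF_concat]
    at hself
  by_cases hc : res (baseF res (l₀ ++ rh)) (l₀ ++ rh ++ [a])
  · rw [hparent] at hc
    rwa [show l₀ ++ (rh ++ [a]) = (l₀ ++ rh) ++ [a] by rw [List.append_assoc]]
  · rw [if_neg hc] at hself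
    exfalso
    have := (baseF_prefix res (l₀ ++ rh)).length_le
    rw [hself] at this
    simp at this
  
lemma not_res_self (res : Hist Ac → Hist Ac → Prop) (l₀ : Hist Ac)
    (h : baseF res l₀ ≠ l₀) : ¬ res (baseF res l₀) l₀ := by
  rcases List.eq_nil_or_concat' l₀ with rfl | ⟨l', a, rfl⟩
  · exact absurd (baseF_nil res) h
  · rw [baseF_concat] at h ⊢
    by_cases hc : res (baseF res l') (l' ++ [a])
    · exact absurd (if_pos hc) h
    · rwa [if_neg hc]

lemma abs_ciInf_le {α : Sort*} [Nonempty α] {F : α → ℝ} {C : ℝ} (h : ∀ x, |F x| ≤ C) :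
    |⨅ x, F x| ≤ C := by
  have hb : BddBelow (Set.range F) := ⟨-C, by rintro _ ⟨x, rfl⟩; linarith [(abs_le.1 (h x)).1]⟩
  rw [abs_le]
  exact ⟨le_ciInf fun x => (abs_le.1 (h x)).1,
    le_trans (ciInf_le hb (Classical.arbitrary α)) (abs_le.1 (h _)).2⟩

lemma abs_ciSup_le {α : Sort*} [Nonempty α] {F : α → ℝ} {C : ℝ} (h : ∀ x, |F x| ≤ C) :
    |⨆ x, F x| ≤ C := by
  have hb : BddAbove (Set.range F) := ⟨C, by rintro _ ⟨x, rfl⟩; linarith [(abs_le.1 (h x)).2]⟩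
  rw [abs_le]
  exact ⟨le_trans (abs_le.1 (h _)).1 (le_ciSup hb (Classical.arbitrary α)),
    ciSup_le fun x => (abs_le.1 (h x)).2⟩

lemma tsum_mul_ge {κ : Type*} [Countable κ] {c e : κ → ℝ} (hc : ∀ k, 0 ≤ c k)
    (hcs : Summable c) (hc1 : (∑' k, c k) ≤ 1) {A : ℝ} (hb : ∀ k, A ≤ e k)
    (hes : Summable (fun k => c k * e k)) : min 0 A ≤ ∑' k, c k * e k := by
  rcases le_or_gt 0 A with hA | hA
  · exact le_trans (min_le_left _ _)
      (tsum_nonneg fun k => mul_nonneg (hc k) (le_trans hA (hb k)))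
  · refine le_trans (min_le_right _ _) ?_
    have h1 : ∑' k, c k * A ≤ ∑' k, c k * e k :=
      Summable.tsum_le_tsum (fun k => mul_le_mul_of_nonneg_left (hb k) (hc k)) (hcs.mul_right A) hes
    have h2 : ∑' k, c k * A = (∑' k, c k) * A := tsum_mul_right
    have h0 : (0:ℝ) ≤ ∑' k, c k := tsum_nonneg hc
    nlinarith

lemma decompose (PM : PlayMeasure Ac) {g : Play Ac → ℝ} (hg : Measurable g) {C : ℝ}
    (hC : ∀ p, |g p| ≤ C) (l₀ : Hist Ac) (σ : Profile Ac) (R : Set (Hist Ac))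
    (hanti : Antichain R) :
    subExp PM σ g l₀.length (pl l₀)
      = (∫ q in (⋃ r : ↥R, Cyl (r : Hist Ac))ᶜ,
            g (splice l₀.length (pl l₀) q) ∂(PM.μ (fun j => (σ j).shift l₀.length (pl l₀))))
        + ∑' r : ↥R, (PM.μ (fun j => (σ j).shift l₀.length (pl l₀)) (Cyl (r : Hist Ac))).toReal
            * subExp PM σ g (l₀ ++ (r : Hist Ac)).length (pl (l₀ ++ (r : Hist Ac))) := by
  have hg1 : Measurable (fun q => g (splice l₀.length (pl l₀) q)) :=
    hg.comp (measurable_splice _ _)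
  have hg1C : ∀ p, |g (splice l₀.length (pl l₀) p)| ≤ C := fun p => hC _
  have h0 : subExp PM σ g l₀.length (pl l₀)
      = ∫ q, g (splice l₀.length (pl l₀) q)
          ∂(PM.μ (fun j => (σ j).shift l₀.length (pl l₀))) := rfl
  rw [h0, integral_decomp (R := R) PM _ hg1 hg1C hanti]
  congr 1
  refine tsum_congr fun r => ?_
  rw [setIntegral_cyl PM _ hg1 (r : Hist Ac)]
  congr 1
  exact subExp_comp PM σ g l₀ (r : Hist Ac)

lemma summable_c (PM : PlayMeasure Ac) (π : Profile Ac) (R : Set (Hist Ac))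
    (hanti : Antichain R) :
    Summable (fun r : ↥R => (PM.μ π (Cyl (r : Hist Ac))).toReal)
      ∧ (∑' r : ↥R, (PM.μ π (Cyl (r : Hist Ac))).toReal) ≤ 1 := by
  haveI := PM.isProb π
  have h1 : ∑' r : ↥R, PM.μ π (Cyl (r : Hist Ac)) = PM.μ π (⋃ r : ↥R, Cyl (r : Hist Ac)) :=
    (mu_UR PM π hanti).symm
  have hne : ∑' r : ↥R, PM.μ π (Cyl (r : Hist Ac)) ≠ ⊤ := by
    rw [h1]; exact measure_ne_top _ _
  refine ⟨ENNReal.summable_toReal hne, ?_⟩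
  rw [← ENNReal.tsum_toReal_eq fun r => measure_ne_top _ _, h1]
  calc (PM.μ π (⋃ r : ↥R, Cyl (r : Hist Ac))).toReal
      ≤ (1 : ℝ≥0∞).toReal := ENNReal.toReal_mono ENNReal.one_ne_top prob_le_one
    _ = 1 := by simp

lemma summable_mul_of_abs_le {κ : Type*} [Countable κ] {c x : κ → ℝ} (hc : ∀ k, 0 ≤ c k)
    (hcs : Summable c) {C : ℝ} (hx : ∀ k, |x k| ≤ C) : Summable fun k => c k * x k := by
  refine Summable.of_abs (Summable.of_nonneg_of_le (fun k => abs_nonneg _) (fun k => ?_)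
    (hcs.mul_right C))
  rw [abs_mul, abs_of_nonneg (hc k)]
  exact mul_le_mul_of_nonneg_left (hx k) (hc k)

lemma master_ineq (PM : PlayMeasure Ac) {g : Play Ac → ℝ} (hg : Measurable g) {C : ℝ}
    (hC : ∀ p, |g p| ≤ C) {i : ι} (res : Hist Ac → Hist Ac → Prop)
    (ρ : Hist Ac → Strategy Ac i) (η : Hist Ac → Profile Ac) (l₀ : Hist Ac) (τ : Profile Ac)
    (A : ℝ)
    (hbound : ∀ r ∈ Rst res l₀,
        A ≤ subExp PM (Function.update τ i (sigmaStar res ρ)) g (l₀ ++ r).length (pl (l₀ ++ r))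
          - subExp PM (Function.update (η r) i (ρ (baseF res l₀))) g (l₀ ++ r).length
              (pl (l₀ ++ r))) :
    (⨅ τ' : Profile Ac, subExp PM (Function.update τ' i (ρ (baseF res l₀))) g l₀.length (pl l₀))
        + min 0 A
      ≤ subExp PM (Function.update τ i (sigmaStar res ρ)) g l₀.length (pl l₀) := by
  classical
  set R := Rst res l₀ with hR
  have hanti : Antichain R := Rst_antichain res l₀
  set b := baseF res l₀ with hb
  set σA := Function.update τ i (sigmaStar res ρ) with hσA
  -- the selection function for the unique restart prefix
  set pick : Hist Ac → Hist Ac :=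
    fun m => if h : ∃ r ∈ R, l₀ ++ r <+: m then h.choose else [] with hpickdef
  have hpick : ∀ {m r}, r ∈ R → l₀ ++ r <+: m → pick m = r := by
    intro m r hr hpre
    have hex : ∃ r' ∈ R, l₀ ++ r' <+: m := ⟨r, hr, hpre⟩
    have h1 : pick m = hex.choose := by rw [hpickdef]; exact dif_pos hex
    obtain ⟨hrm, hprem⟩ := hex.choose_spec
    rw [h1]
    rcases List.prefix_or_prefix_of_prefix hprem hpre with h2 | h2
    · exact hanti _ hrm _ hr ((List.prefix_append_right_inj l₀).mp h2)
    · exact (hanti _ hr _ hrm ((List.prefix_append_right_inj l₀).mp h2)).symm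
  -- the deviation-punishing opponent profile
  set τhat : Profile Ac := fun j =>
    { act := fun t p =>
        if ∃ r ∈ R, l₀ ++ r <+: histOf t p then ((η (pick (histOf t p))) j).act t p
        else (τ j).act t p,
      depends_on_past := by
        intro t p q hpq
        have hh : histOf t p = histOf t q := histOf_eq_of_agree hpq
        simp only [hh]
        split_ifs with hcon
        · exact ((η (pick (histOf t q))) j).depends_on_past t p q hpq
        · exact (τ j).depends_on_past t p q hpq } with hτhat
  set σB := Function.update τhat i (ρ b) with hσB
  have hτhat_act : ∀ (j : ι) (t : ℕ) (p : Play Ac),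
      (τhat j).act t p
        = if ∃ r ∈ R, l₀ ++ r <+: histOf t p then ((η (pick (histOf t p))) j).act t p
          else (τ j).act t p := fun j t p => rfl
  -- agreement of the two shifted profiles off the restart region
  have hagree : Agree R (fun j => (σA j).shift l₀.length (pl l₀))
      (fun j => (σB j).shift l₀.length (pl l₀)) := by
    intro j t q hnoR'
    show ((σA j).shift l₀.length (pl l₀)).act t q = ((σB j).shift l₀.length (pl l₀)).act t q
    by_cases hji : j = i
    · subst hji
      rw [hσA, hσB, Function.update_self, Function.update_self]
      exact sigmaStar_act_eq res ρ l₀ hnoR'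
    · rw [hσA, hσB, Function.update_of_ne hji, Function.update_of_ne hji, shift_act, shift_act,
        hτhat_act, histOf_splice]
      have hcond : ¬ ∃ r ∈ R, l₀ ++ r <+: l₀ ++ histOf t q := by
        rintro ⟨r, hrR, hpre⟩
        exact hnoR' r hrR ((List.prefix_append_right_inj l₀).mp hpre)
      rw [if_neg hcond]
  -- at a restart point, σB continues like the punishing profile η r
  have hwr : ∀ r : ↥R,
      subExp PM σB g (l₀ ++ (r : Hist Ac)).length (pl (l₀ ++ (r : Hist Ac)))
        = subExp PM (Function.update (η (r : Hist Ac)) i (ρ b)) g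
            (l₀ ++ (r : Hist Ac)).length (pl (l₀ ++ (r : Hist Ac))) := by
    intro r
    have hprof : (fun j => (σB j).shift (l₀ ++ (r : Hist Ac)).length (pl (l₀ ++ (r : Hist Ac))))
        = fun j => ((Function.update (η (r : Hist Ac)) i (ρ b)) j).shift
            (l₀ ++ (r : Hist Ac)).length (pl (l₀ ++ (r : Hist Ac))) := by
      funext j
      by_cases hji : j = i
      · subst hji
        rw [hσB, Function.update_self, Function.update_self]
      · rw [hσB, Function.update_of_ne hji, Function.update_of_ne hji]
        apply Strategy.ext'
        intro t q
        rw [shift_act, shift_act, hτhat_act, histOf_splice]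
        have hpre : l₀ ++ (r : Hist Ac) <+: (l₀ ++ (r : Hist Ac)) ++ histOf t q :=
          List.prefix_append _ _
        have hex : ∃ r' ∈ R, l₀ ++ r' <+: (l₀ ++ (r : Hist Ac)) ++ histOf t q := ⟨r, r.2, hpre⟩
        rw [if_pos hex, hpick r.2 hpre]
    unfold subExp
    rw [hprof]
  -- key decompositions
  have hdecA := decompose PM hg hC l₀ σA R hanti
  have hdecB := decompose PM hg hC l₀ σB R hanti
  -- equal coefficients
  have hcr : ∀ r : ↥R,
      PM.μ (fun j => (σA j).shift l₀.length (pl l₀)) (Cyl (r : Hist Ac))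
        = PM.μ (fun j => (σB j).shift l₀.length (pl l₀)) (Cyl (r : Hist Ac)) :=
    fun r => mu_cyl_eq_of_agree_mem PM hagree hanti r.2
  -- equal integrals outside the restart region
  have hI : (∫ q in (⋃ r : ↥R, Cyl (r : Hist Ac))ᶜ,
        g (splice l₀.length (pl l₀) q) ∂(PM.μ (fun j => (σA j).shift l₀.length (pl l₀))))
      = ∫ q in (⋃ r : ↥R, Cyl (r : Hist Ac))ᶜ,
          g (splice l₀.length (pl l₀) q) ∂(PM.μ (fun j => (σB j).shift l₀.length (pl l₀))) :=
    congrArg (fun m : Measure (Play Ac) => ∫ q, g (splice l₀.length (pl l₀) q) ∂m)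
      (restrict_compl_UR_eq PM hagree hanti)
  -- rewrite the coefficients and restart values in the second decomposition
  have hdecB' : subExp PM σB g l₀.length (pl l₀)
      = (∫ q in (⋃ r : ↥R, Cyl (r : Hist Ac))ᶜ, g (splice l₀.length (pl l₀) q)
            ∂(PM.μ (fun j => (σB j).shift l₀.length (pl l₀))))
        + ∑' r : ↥R, (PM.μ (fun j => (σA j).shift l₀.length (pl l₀)) (Cyl (r : Hist Ac))).toReal
            * subExp PM (Function.update (η (r : Hist Ac)) i (ρ b)) g
                (l₀ ++ (r : Hist Ac)).length (pl (l₀ ++ (r : Hist Ac))) := by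
    rw [hdecB]
    congr 1
    refine tsum_congr fun r => ?_
    rw [hcr r, hwr r]
  obtain ⟨hcs, hc1⟩ := summable_c PM (fun j => (σA j).shift l₀.length (pl l₀)) R hanti
  set c : ↥R → ℝ :=
    fun r => (PM.μ (fun j => (σA j).shift l₀.length (pl l₀)) (Cyl (r : Hist Ac))).toReal with hc
  set e : ↥R → ℝ :=
    fun r => subExp PM σA g (l₀ ++ (r : Hist Ac)).length (pl (l₀ ++ (r : Hist Ac))) with he
  set w : ↥R → ℝ :=
    fun r => subExp PM (Function.update (η (r : Hist Ac)) i (ρ b)) g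
      (l₀ ++ (r : Hist Ac)).length (pl (l₀ ++ (r : Hist Ac))) with hw
  have hcnn : ∀ r, 0 ≤ c r := fun r => ENNReal.toReal_nonneg
  have heb : ∀ r, |e r| ≤ C := fun r => abs_subExp_le PM _ hC _ _
  have hwb : ∀ r, |w r| ≤ C := fun r => abs_subExp_le PM _ hC _ _
  have hse : Summable (fun r => c r * e r) := summable_mul_of_abs_le hcnn hcs heb
  have hsw : Summable (fun r => c r * w r) := summable_mul_of_abs_le hcnn hcs hwb
  have hdiff : Summable (fun r => c r * (e r - w r)) := by
    have hfun : (fun r => c r * (e r - w r)) = fun r => c r * e r - c r * w r := by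
      funext r; ring
    rw [hfun]; exact hse.sub hsw
  have hAle : ∀ r : ↥R, A ≤ e r - w r := fun r => by
    have := hbound (r : Hist Ac) r.2
    simp only [he, hw]
    linarith
  have htsum_ge : min 0 A ≤ ∑' r, c r * (e r - w r) := tsum_mul_ge hcnn hcs hc1 hAle hdiff
  have hsplit : ∑' r, c r * (e r - w r) = (∑' r, c r * e r) - ∑' r, c r * w r := by
    have hfun : (fun r => c r * (e r - w r)) = fun r => c r * e r - c r * w r := by
      funext r; ring
    rw [hfun, Summable.tsum_sub hse hsw]
  have hWle : (⨅ τ' : Profile Ac, subExp PM (Function.update τ' i (ρ b)) g l₀.length (pl l₀))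
      ≤ subExp PM σB g l₀.length (pl l₀) := by
    refine le_trans (ciInf_le ⟨-C, ?_⟩ τhat) (le_of_eq rfl)
    rintro x ⟨τ', rfl⟩
    linarith [(abs_le.1 (abs_subExp_le PM (Function.update τ' i (ρ b)) hC l₀.length (pl l₀))).1]
  linarith [hdecA, hdecB', hI, hWle, htsum_ge, hsplit]

lemma main_proof (PM : PlayMeasure Ac) (f : ι → Play Ac → ℝ)
    (hbdd : ∀ j, BddPayoff (f j)) (hmeas : ∀ j, Measurable (f j))
    (i : ι) (δ : ℝ) (hδ : 0 < δ) :
    ∃ σi : Strategy Ac i, ∀ (τ : Profile Ac) (n : ℕ) (h : Play Ac),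
      subMaxmin PM (f i) i n h - δ ≤ subExp PM (Function.update τ i σi) (f i) n h := by
  classical
  obtain ⟨C, hC⟩ := hbdd i
  have hg : Measurable (f i) := hmeas i
  set g := f i with hgdef
  have habs : ∀ (σ : Profile Ac) (n : ℕ) (h : Play Ac), |subExp PM σ g n h| ≤ C :=
    fun σ n h => abs_subExp_le PM σ hC n h
  have hbdR : ∀ (σi : Strategy Ac i) (l : Hist Ac), BddBelow (Set.range fun τ : Profile Ac =>
      subExp PM (Function.update τ i σi) g l.length (pl l)) := fun σi l =>
    ⟨-C, by rintro x ⟨τ, rfl⟩; linarith [(abs_le.1 (habs (Function.update τ i σi) l.length (pl l))).1]⟩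
  set W : Strategy Ac i → Hist Ac → ℝ := fun σi l =>
    ⨅ τ : Profile Ac, subExp PM (Function.update τ i σi) g l.length (pl l) with hWdef
  set v : Hist Ac → ℝ := fun l => subMaxmin PM g i l.length (pl l) with hvdef
  have hvW : ∀ l, v l = ⨆ σi : Strategy Ac i, W σi l := fun l => rfl
  have hWb : ∀ σi l, |W σi l| ≤ C := fun σi l => abs_ciInf_le fun τ => habs _ _ _
  have hvb : ∀ l, |v l| ≤ C := fun l => by rw [hvW l]; exact abs_ciSup_le fun σi => hWb σi l
  -- δ/4-optimal strategies in every subgame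
  have hρex : ∀ l : Hist Ac, ∃ σi : Strategy Ac i, v l - δ/4 < W σi l := by
    intro l
    have h1 : v l - δ/4 < ⨆ σi : Strategy Ac i, W σi l := by rw [← hvW l]; linarith
    exact exists_lt_of_lt_ciSup h1
  choose ρ hρ using hρex
  set res : Hist Ac → Hist Ac → Prop := fun b l => W (ρ b) l < v l - 3*δ/4 with hres
  set σS := sigmaStar res ρ with hσS
  set u : Hist Ac → ℝ := fun l =>
    ⨅ τ : Profile Ac, subExp PM (Function.update τ i σS) g l.length (pl l) with hudef
  have huW : ∀ l, u l = W σS l := fun l => rfl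
  have hub : ∀ l, |u l| ≤ C := fun l => by rw [huW l]; exact hWb σS l
  have hu_le : ∀ (l : Hist Ac) (τ : Profile Ac),
      u l ≤ subExp PM (Function.update τ i σS) g l.length (pl l) := fun l τ =>
    ciInf_le (hbdR σS l) τ
  -- infimum of the guarantee gap over fresh histories
  haveI : Nonempty {l : Hist Ac // baseF res l = l} := ⟨⟨[], baseF_nil res⟩⟩
  set D : ℝ := ⨅ l : {l : Hist Ac // baseF res l = l}, (u l.1 - v l.1) with hD
  have hDbdd : BddBelow (Set.range fun l : {l : Hist Ac // baseF res l = l} => u l.1 - v l.1) :=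
    ⟨-(2*C), by rintro x ⟨l, rfl⟩; show -(2*C) ≤ u l.1 - v l.1; linarith [(abs_le.1 (hub l.1)).1, (abs_le.1 (hvb l.1)).2]⟩
  have hD_le : ∀ l : Hist Ac, baseF res l = l → D ≤ u l - v l := fun l h =>
    ciInf_le hDbdd ⟨l, h⟩
  -- punishing opponent profiles
  have hηex : ∀ (b m : Hist Ac), ∃ τ' : Profile Ac,
      subExp PM (Function.update τ' i (ρ b)) g m.length (pl m) < W (ρ b) m + δ/4 := by
    intro b m
    apply exists_lt_of_ciInf_lt
    rw [show (⨅ τ' : Profile Ac, subExp PM (Function.update τ' i (ρ b)) g m.length (pl m))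
      = W (ρ b) m from rfl]
    linarith
  choose ηf hηf using hηex
  -- master inequality
  have hmaster : ∀ (l₀ : Hist Ac) (τ : Profile Ac),
      W (ρ (baseF res l₀)) l₀ + min 0 (D + δ/2)
        ≤ subExp PM (Function.update τ i σS) g l₀.length (pl l₀) := by
    intro l₀ τ
    have happ := master_ineq PM hg hC res ρ (fun m => ηf (baseF res l₀) (l₀ ++ m)) l₀ τ
      (D + δ/2) ?hb
    case hb =>
      intro r hr
      have h1 : u (l₀ ++ r) ≤ subExp PM (Function.update τ i σS) g
          (l₀ ++ r).length (pl (l₀ ++ r)) := hu_le _ τ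
      have h2 : D ≤ u (l₀ ++ r) - v (l₀ ++ r) := hD_le _ hr.2.1
      have h3 := hηf (baseF res l₀) (l₀ ++ r)
      have h4 : W (ρ (baseF res l₀)) (l₀ ++ r) < v (l₀ ++ r) - 3*δ/4 :=
        res_at_restart res l₀ hr
      linarith
    exact happ
  have hu_ge : ∀ l₀ : Hist Ac, W (ρ (baseF res l₀)) l₀ + min 0 (D + δ/2) ≤ u l₀ := by
    intro l₀
    show _ ≤ ⨅ τ : Profile Ac, subExp PM (Function.update τ i σS) g l₀.length (pl l₀)
    exact le_ciInf fun τ => hmaster l₀ τ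
  have hfresh : ∀ l : Hist Ac, baseF res l = l → -(δ/4) + min 0 (D + δ/2) ≤ u l - v l := by
    intro l hl
    have h1 := hu_ge l
    rw [hl] at h1
    have h2 := hρ l
    linarith
  have hDge : -(δ/4) + min 0 (D + δ/2) ≤ D := by
    rw [hD]
    exact le_ciInf fun l => hfresh l.1 l.2
  have hD4 : -(δ/4) ≤ D := by
    rcases le_or_gt 0 (D + δ/2) with h | h
    · rw [min_eq_left h] at hDge; linarith
    · rw [min_eq_right (le_of_lt h)] at hDge; linarith
  have hmin0 : min 0 (D + δ/2) = 0 := min_eq_left (by linarith)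
  have hWv : ∀ l₀ : Hist Ac, v l₀ - 3*δ/4 ≤ W (ρ (baseF res l₀)) l₀ := by
    intro l₀
    by_cases hb : baseF res l₀ = l₀
    · rw [hb]; linarith [hρ l₀]
    · have h1 : ¬ res (baseF res l₀) l₀ := not_res_self res l₀ hb
      have h2 : ¬ (W (ρ (baseF res l₀)) l₀ < v l₀ - 3*δ/4) := h1
      linarith [not_lt.1 h2]
  refine ⟨σS, fun τ n h => ?_⟩
  have hfin := hmaster (histOf n h) τ
  rw [hmin0, add_zero] at hfin
  have h2 : v (histOf n h) - δ ≤ subExp PM (Function.update τ i σS) g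
      (histOf n h).length (pl (histOf n h)) := by
    have := hWv (histOf n h); linarith
  have hagr : ∀ s, s < n → pl (histOf n h) s = h s := fun s hs => pl_histOf hs h
  rw [hvdef] at h2
  simp only [histOf_length] at h2
  rw [subMaxmin_congr PM g hagr, subExp_congr PM _ g hagr] at h2
  exact h2

end Aux
/-- Every player has a subgame-perfect `δ`-maxmin strategy: a strategy that,
in every subgame and against every strategy profile of the opponents, yields her at least
her maxmin value in that subgame minus `δ`. -/
theorem exists_subgame_perfect_maxmin (PM : PlayMeasure Ac) (f : ι → Play Ac → ℝ)
    (hbdd : ∀ j, BddPayoff (f j)) (hmeas : ∀ j, Measurable (f j))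
    (i : ι) (δ : ℝ) (hδ : 0 < δ) :
    ∃ σi : Strategy Ac i, ∀ (τ : Profile Ac) (n : ℕ) (h : Play Ac),
      subMaxmin PM (f i) i n h - δ ≤ subExp PM (Function.update τ i σi) (f i) n h := by
  exact main_proof PM f hbdd hmeas i δ hδ

end Blackwell
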